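/- Let K be a totally real number field of degree d over Q, let n > d, and let α = (α_1,…,α_n) be an n-tuple of totally nonnegative algebraic integers with O_K = span_Z{α_1,…,α_n}. If Sg(α) ≠ C_Q(α) ∩ O_K, then the absolute Weil height H(α) = H_K(α)^{1/d} satisfies H(α) ≥ ( 2·|Δ_K|·√(n−d+1)·(n−d−1)! / (d!·n!) )^{1/(2d)}. -/

import Mathlib

open scoped NumberField Pointwise
open IsDedekindDomain

/-- The normalized absolute value of `a ∈ K` at a finite place `v` of the number field `K`,
namely `|a|_v = N(v)^{-v(a)}`, so that the product formula holds. -/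
noncomputable def finAbs {K : Type*} [Field K] [NumberField K]
    (v : HeightOneSpectrum (𝓞 K)) (a : K) : ℝ :=
  (WithZeroMulInt.toNNReal
    (by
      simp only [ne_eq, Nat.cast_eq_zero]
      exact fun h => v.ne_bot (Ideal.absNorm_eq_zero_iff.mp h) :
        (Ideal.absNorm v.asIdeal : NNReal) ≠ 0)
    (v.valuation K a) : ℝ)

/-- The inhomogeneous Weil height `H_K` of a tuple of elements of `K`, relative to `K`:
`H_K(γ) = ∏_v max{1, |γ_1|_v, …, |γ_m|_v}` over all places of `K`, where at an infinite
place `w` the normalized absolute value is `w(·)^mult w`. -/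
noncomputable def heightK {K : Type*} [Field K] [NumberField K] {m : ℕ} (γ : Fin m → K) : ℝ :=
  (∏ w : NumberField.InfinitePlace K, max 1 (⨆ i, w (γ i)) ^ w.mult) *
  ∏ᶠ v : HeightOneSpectrum (𝓞 K), max 1 (⨆ i, finAbs v (γ i))

/-- `disc(γ_I)`: the discriminant of the sub-`d`-tuple of `γ` indexed by the subset `I`
of cardinality `d`, i.e. the square of the determinant of the matrix `(σ_i(γ_{i_j}))`. -/
noncomputable def subDiscR {K : Type*} [Field K] {d m : ℕ} (σ : Fin d → (K →+* ℝ))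
    (γ : Fin m → K) (I : Finset (Fin m)) (hI : I.card = d) : ℝ :=
  (Matrix.of fun i j => σ i (γ ((I.orderIsoOfFin hI j : Fin m)))).det ^ 2

/-- `D(α) = (1/|Δ_K|) ∑_{I ⊆ [n], |I| = d} |disc(α_I)|`. -/
noncomputable def DhtR {K : Type*} [Field K] [NumberField K] {d n : ℕ}
    (σ : Fin d → (K →+* ℝ)) (α : Fin n → K) : ℝ :=
  (1 / |(NumberField.discr K : ℝ)|) *
    ∑ I ∈ (Finset.powersetCard d (Finset.univ : Finset (Fin n))).attach,
      |subDiscR σ α I.1 (Finset.mem_powersetCard.mp I.2).2|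

/-- `M(α,β) = (1/|Δ_K|^{1/2}) max_{I ⊆ [n+1], |I| = d} |disc(α(β)_I)|^{1/2}`, where
`α(β) = (α_1, …, α_n, β)`. -/
noncomputable def MhtR {K : Type*} [Field K] [NumberField K] {d n : ℕ}
    (σ : Fin d → (K →+* ℝ)) (α : Fin n → K) (β : K) : ℝ :=
  (1 / Real.sqrt |(NumberField.discr K : ℝ)|) *
    ⨆ I : {I : Finset (Fin (n + 1)) // I ∈ Finset.powersetCard d Finset.univ},
      Real.sqrt |subDiscR σ (Fin.snoc α β) I.1 (Finset.mem_powersetCard.mp I.2).2|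

/-- The additive semigroup `Sg(α) = { ∑ α_i x_i : x ∈ ℤ^n_{≥0} }` generated by the `α_i`,
viewed inside `K`. -/
def Sg {K : Type*} [Field K] [NumberField K] {n : ℕ} (α : Fin n → 𝓞 K) : Set K :=
  {β | ∃ x : Fin n → ℕ, β = ∑ i, (x i : K) * (α i : K)}

/-- `Sg_s(α)`: the set of elements of `Sg(α)` admitting at least `s` distinct
representations `x ∈ ℤ^n_{≥0}` with `∑ α_i x_i = β`. -/
def SgS {K : Type*} [Field K] [NumberField K] {n : ℕ} (s : ℕ) (α : Fin n → 𝓞 K) : Set K :=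
  {β | ∃ T : Finset (Fin n → ℕ), s ≤ T.card ∧ ∀ x ∈ T, β = ∑ i, (x i : K) * (α i : K)}

/-- The rational cone `C_ℚ(α) = { ∑ α_i x_i : x ∈ ℚ^n_{≥0} }`, viewed inside `K`. -/
def CQ {K : Type*} [Field K] [NumberField K] {n : ℕ} (α : Fin n → 𝓞 K) : Set K :=
  {β | ∃ x : Fin n → ℚ, (∀ i, 0 ≤ x i) ∧ β = ∑ i, (x i : K) * (α i : K)}

/-- The Minkowski embedding `K → ℝ^d` attached to the real embeddings `σ_1, …, σ_d`. -/
def emb {K : Type*} [Field K] {d : ℕ} (σ : Fin d → (K →+* ℝ)) (γ : K) : Fin d → ℝ :=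
  fun j => σ j γ

/-- The real cone in `ℝ^d` spanned by the Minkowski images of the `α_i`. -/
def realCone {K : Type*} [Field K] [NumberField K] {d n : ℕ} (σ : Fin d → (K →+* ℝ))
    (α : Fin n → 𝓞 K) : Set (Fin d → ℝ) :=
  {y | ∃ x : Fin n → ℝ, (∀ i, 0 ≤ x i) ∧ y = ∑ i, x i • emb σ (α i : K)}

/-- `r(β)`: the number of distinct representations of `β` in terms of `α`. -/
noncomputable def reps {K : Type*} [Field K] [NumberField K] {n : ℕ} (α : Fin n → 𝓞 K)
    (β : K) : ℕ :=
  Set.ncard {x : Fin n → ℕ | β = ∑ i, (x i : K) * (α i : K)}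


/-! ### Auxiliary lemmas -/

lemma finAbs_le_one {K : Type*} [Field K] [NumberField K] (v : HeightOneSpectrum (𝓞 K))
    (γ : 𝓞 K) : finAbs v (γ : K) ≤ 1 := by
  have h1 : (1 : NNReal) < (Ideal.absNorm v.asIdeal : NNReal) := by
    have h0 : Ideal.absNorm v.asIdeal ≠ 0 := fun h => v.ne_bot (Ideal.absNorm_eq_zero_iff.mp h)
    have h1' : Ideal.absNorm v.asIdeal ≠ 1 := fun h =>
      v.isPrime.ne_top (Ideal.absNorm_eq_one_iff.mp h)
    have : 1 < Ideal.absNorm v.asIdeal := by omega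
    exact_mod_cast this
  have hv : v.valuation K ((γ : K)) ≤ 1 := by
    rw [NumberField.RingOfIntegers.coe_eq_algebraMap]
    exact v.valuation_le_one (K := K) γ
  have := (WithZeroMulInt.toNNReal_strictMono h1).monotone hv
  rw [map_one] at this
  exact_mod_cast this

lemma heightK_int_eq {K : Type*} [Field K] [NumberField K] {n : ℕ} (hn : n ≠ 0)
    (α : Fin n → 𝓞 K) :
    heightK (fun i => (α i : K)) =
      ∏ w : NumberField.InfinitePlace K, max 1 (⨆ i, w ((α i : K))) ^ w.mult := by
  have : Nonempty (Fin n) := Fin.pos_iff_nonempty.mp (Nat.pos_of_ne_zero hn)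
  unfold heightK
  have h1 : ∀ v : HeightOneSpectrum (𝓞 K), max 1 (⨆ i, finAbs v ((α i : K))) = 1 := fun v =>
    max_eq_left (ciSup_le fun i => finAbs_le_one v (α i))
  rw [(finprod_congr h1).trans finprod_one, mul_one]

lemma heightK_one_le {K : Type*} [Field K] [NumberField K] {n : ℕ} (hn : n ≠ 0)
    (α : Fin n → 𝓞 K) : 1 ≤ heightK (fun i => (α i : K)) := by
  rw [heightK_int_eq hn α]
  calc (1:ℝ) = ∏ _w : NumberField.InfinitePlace K, 1 := by rw [Finset.prod_const_one]
    _ ≤ ∏ w : NumberField.InfinitePlace K, max 1 (⨆ i, w ((α i : K))) ^ w.mult :=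
      Finset.prod_le_prod (fun _ _ => zero_le_one) fun w _ => one_le_pow₀ (le_max_left _ _)

lemma prod_max_le_heightK {K : Type*} [Field K] [NumberField K] {d n : ℕ} (hn : n ≠ 0)
    (σ : Fin d → (K →+* ℝ)) (hσ : Function.Injective σ) (α : Fin n → 𝓞 K)
    (hα : ∀ i j, 0 ≤ σ j ((α i : K))) :
    ∏ j, max 1 (⨆ i, σ j ((α i : K))) ≤ heightK (fun i => (α i : K)) := by
  classical
  have : Nonempty (Fin n) := Fin.pos_iff_nonempty.mp (Nat.pos_of_ne_zero hn)
  set f : NumberField.InfinitePlace K → ℝ := fun w => max 1 (⨆ i, w ((α i : K))) with hf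
  have hf1 : ∀ w, 1 ≤ f w := fun w => le_max_left _ _
  set F : Fin d → (K →+* ℂ) := fun j => (Complex.ofRealHom).comp (σ j) with hF
  have hFinj : Function.Injective F := by
    intro j j' h
    apply hσ
    ext x
    have := congrArg (fun φ => φ x) h
    simpa [hF, Complex.ofReal_inj] using this
  have hFreal : ∀ j, NumberField.ComplexEmbedding.IsReal (F j) := by
    intro j
    rw [NumberField.ComplexEmbedding.isReal_iff]
    ext x
    simp [hF, NumberField.ComplexEmbedding.conjugate_coe_eq, Complex.conj_ofReal]
  set p : Fin d → NumberField.InfinitePlace K := fun j => NumberField.InfinitePlace.mk (F j)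
    with hp
  have hpinj : Function.Injective p := by
    intro j j' h
    rcases NumberField.InfinitePlace.mk_eq_iff.mp h with h' | h'
    · exact hFinj h'
    · rw [NumberField.ComplexEmbedding.isReal_iff.mp (hFreal j)] at h'
      exact hFinj h'
  have hval : ∀ j i, (p j) ((α i : K)) = σ j ((α i : K)) := by
    intro j i
    rw [hp]
    rw [NumberField.InfinitePlace.apply]
    simp only [hF, RingHom.coe_comp, Function.comp_apply, Complex.ofRealHom_eq_coe,
      Complex.norm_real, Real.norm_eq_abs]
    exact abs_of_nonneg (hα i j)
  have hpj : ∀ j, f (p j) = max 1 (⨆ i, σ j ((α i : K))) := fun j =>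
    congrArg (max 1) (iSup_congr fun i => hval j i)
  calc ∏ j, max 1 (⨆ i, σ j ((α i : K))) = ∏ j, f (p j) := by
        exact Finset.prod_congr rfl fun j _ => (hpj j).symm
    _ = ∏ w ∈ Finset.univ.image p, f w := (Finset.prod_image fun a _ b _ h => hpinj h).symm
    _ ≤ ∏ w ∈ Finset.univ.image p, f w ^ w.mult := by
        refine Finset.prod_le_prod (fun w _ => le_trans zero_le_one (hf1 w)) fun w _ => ?_
        exact le_self_pow₀ (hf1 w) NumberField.InfinitePlace.mult_ne_zero
    _ ≤ ∏ w : NumberField.InfinitePlace K, f w ^ w.mult := by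
        rw [← Finset.prod_sdiff (Finset.subset_univ (Finset.univ.image p))]
        refine le_mul_of_one_le_left ?_ ?_
        · exact Finset.prod_nonneg fun w _ => pow_nonneg (le_trans zero_le_one (hf1 w)) _
        · calc (1:ℝ) = ∏ _w ∈ Finset.univ \ Finset.univ.image p, 1 := by rw [Finset.prod_const_one]
            _ ≤ _ := Finset.prod_le_prod (fun _ _ => zero_le_one) fun w _ => one_le_pow₀ (hf1 w)
    _ = heightK (fun i => (α i : K)) := (heightK_int_eq hn α).symm

lemma abs_det_le_prod {d : ℕ} (A : Matrix (Fin d) (Fin d) ℝ) (m : Fin d → ℝ)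
    (h : ∀ j k, |A j k| ≤ m j) :
    |A.det| ≤ (Nat.factorial d : ℝ) * ∏ j, m j := by
  calc |A.det| = |∑ σ : Equiv.Perm (Fin d), Equiv.Perm.sign σ • ∏ i, A (σ i) i| := by
        rw [Matrix.det_apply]
    _ ≤ ∑ σ : Equiv.Perm (Fin d), |Equiv.Perm.sign σ • ∏ i, A (σ i) i| :=
        Finset.abs_sum_le_sum_abs _ _
    _ = ∑ σ : Equiv.Perm (Fin d), ∏ i, |A (σ i) i| := by
        refine Finset.sum_congr rfl fun σ _ => ?_
        show AbsoluteValue.abs _ = _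
        rw [AbsoluteValue.map_units_int_smul, AbsoluteValue.map_prod]
        rfl
    _ ≤ ∑ σ : Equiv.Perm (Fin d), ∏ i, m (σ i) := by
        refine Finset.sum_le_sum fun σ _ => ?_
        exact Finset.prod_le_prod (fun i _ => abs_nonneg _) fun i _ => h (σ i) i
    _ = ∑ _σ : Equiv.Perm (Fin d), ∏ j, m j := by
        refine Finset.sum_congr rfl fun σ _ => ?_
        exact Equiv.prod_comp σ m
    _ = (Nat.factorial d : ℝ) * ∏ j, m j := by
        rw [Finset.sum_const, Finset.card_univ, Fintype.card_perm, Fintype.card_fin,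
          nsmul_eq_mul]

lemma discr_eq_det_sq {K : Type*} [Field K] [NumberField K] {d : ℕ}
    (σ : Fin d → (K →+* ℝ)) (hσ : Function.Injective σ) (hd : Module.finrank ℚ K = d)
    (eι : Module.Free.ChooseBasisIndex ℤ (𝓞 K) ≃ Fin d) :
    ((NumberField.discr K : ℝ)) =
      (Matrix.of fun t j => σ j (NumberField.integralBasis K (eι.symm t))).det ^ 2 := by
  classical
  set G : Fin d → (K →ₐ[ℚ] ℂ) := fun j => RingHom.equivRatAlgHom K ℂ (Complex.ofRealHom.comp (σ j))
    with hG
  have hGinj : Function.Injective G := by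
    intro j j' h
    apply hσ
    ext x
    have := congrArg (fun (φ : K →ₐ[ℚ] ℂ) => φ x) h
    simpa [hG, RingHom.equivRatAlgHom, RingHom.toRatAlgHom, Complex.ofReal_inj] using this
  have hcard : Fintype.card (Fin d) = Fintype.card (K →ₐ[ℚ] ℂ) := by
    rw [Fintype.card_fin, Fintype.card_congr (RingHom.equivRatAlgHom K ℂ).symm,
      NumberField.Embeddings.card K ℂ, hd]
  have hbij : Function.Bijective G :=
    (Fintype.bijective_iff_injective_and_card G).mpr ⟨hGinj, hcard⟩
  set e : Fin d ≃ (K →ₐ[ℚ] ℂ) := Equiv.ofBijective G hbij with he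
  set b : Fin d → K := fun t => NumberField.integralBasis K (eι.symm t) with hb
  have key := Algebra.discr_eq_det_embeddingsMatrixReindex_pow_two ℚ ℂ b e
  have hL : Algebra.discr ℚ b = ((NumberField.discr K : ℚ)) := by
    rw [NumberField.coe_discr]
    have : b = ⇑(NumberField.integralBasis K) ∘ ⇑eι.symm := rfl
    rw [this, Algebra.discr_reindex]
  have hM : Algebra.embeddingsMatrixReindex ℚ ℂ b e =
      (Matrix.of fun t j => σ j (b t)).map Complex.ofRealHom := by
    ext t j
    simp only [Algebra.embeddingsMatrixReindex, Algebra.embeddingsMatrix,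
      Matrix.reindex_apply, Matrix.submatrix_apply, Equiv.refl_symm, Equiv.refl_apply,
      Matrix.map_apply, Matrix.of_apply]
    rw [Equiv.symm_symm, he]
    simp [hG, Equiv.ofBijective_apply, RingHom.equivRatAlgHom, RingHom.toRatAlgHom]
  rw [hL, hM] at key
  rw [show ((Matrix.of fun t j => σ j (b t)).map ⇑Complex.ofRealHom) =
      Complex.ofRealHom.mapMatrix (Matrix.of fun t j => σ j (b t)) from rfl,
    ← RingHom.map_det] at key
  rw [map_intCast] at key
  have goal2 : ((NumberField.discr K : ℝ) : ℂ) =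
      ((((Matrix.of fun t j => σ j (b t)).det ^ 2 : ℝ)) : ℂ) := by
    push_cast
    rw [key]
    norm_num [Complex.ofRealHom_eq_coe]
  have := Complex.ofReal_injective goal2
  rw [hb] at this
  exact this

lemma exists_good_minor {K : Type*} [Field K] [NumberField K] {d n : ℕ}
    (α : Fin n → 𝓞 K)
    (hspan : Submodule.span ℤ (Set.range α) = ⊤) (b0 : Module.Basis (Fin d) ℤ (𝓞 K)) :
    ∃ v : Fin d → Fin n,
      (Matrix.of fun t k => (b0.repr (α (v k)) t : ℚ)).det ≠ 0 := by
  classical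
  set b' : Module.Basis (Fin d) ℚ K :=
    Module.Basis.localizationLocalization ℚ (nonZeroDivisors ℤ) K b0 with hb'
  have hb'app : ∀ t, b' t = algebraMap (𝓞 K) K (b0 t) := fun t =>
    Module.Basis.localizationLocalization_apply ℚ (nonZeroDivisors ℤ) K b0 t
  set x : Fin n → (Fin d → ℚ) := fun i t => (b0.repr (α i) t : ℚ) with hxdef
  have hsum : ∀ (γ : 𝓞 K), ∑ t, (b0.repr γ t : ℚ) • (b' t) = (γ : K) := by
    intro γ
    conv_rhs => rw [show (γ : K) = algebraMap (𝓞 K) K γ from rfl, ← Module.Basis.sum_repr b0 γ]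
    rw [map_sum]
    refine Finset.sum_congr rfl fun t _ => ?_
    rw [map_zsmul, hb'app, ← Int.cast_smul_eq_zsmul ℚ]
  have hx : ∀ i, ∑ t, x i t • (b' t) = ((α i : K)) := fun i => hsum (α i)
  have hspanK : Submodule.span ℚ (Set.range (fun i => ((α i : K)))) = ⊤ := by
    rw [eq_top_iff, ← b'.span_eq]
    refine Submodule.span_le.mpr ?_
    rintro z ⟨t, rfl⟩
    have hmem : b0 t ∈ Submodule.span ℤ (Set.range α) := by rw [hspan]; trivial
    obtain ⟨c, hc⟩ := (Submodule.mem_span_range_iff_exists_fun (R := ℤ)).mp hmem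
    have : (b' t : K) = ∑ i, (c i : ℚ) • ((α i : K)) := by
      rw [hb'app, ← hc]
      rw [map_sum]
      refine Finset.sum_congr rfl fun i _ => ?_
      rw [map_zsmul, ← Int.cast_smul_eq_zsmul ℚ]
    rw [this]
    exact Submodule.sum_mem _ fun i _ =>
      Submodule.smul_mem _ _ (Submodule.subset_span ⟨i, rfl⟩)
  set L : (Fin d → ℚ) ≃ₗ[ℚ] K := b'.equivFun.symm with hL
  have hLx : ∀ i, L (x i) = ((α i : K)) := by
    intro i
    rw [hL, Module.Basis.equivFun_symm_apply]
    exact hx i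
  have hxspan : Submodule.span ℚ (Set.range x) = ⊤ := by
    have hrange : Set.range x = ⇑(L.symm.toLinearMap) '' Set.range (fun i => ((α i : K))) := by
      ext y
      constructor
      · rintro ⟨i, rfl⟩
        exact ⟨(α i : K), ⟨i, rfl⟩, by
          simp only [← hLx i, LinearEquiv.symm_apply_apply]
          exact L.symm_apply_apply (x i)⟩
      · rintro ⟨z, ⟨i, rfl⟩, rfl⟩
        exact ⟨i, by simp only [← hLx i]
                     exact (L.symm_apply_apply (x i)).symm⟩
    rw [hrange, ← Submodule.map_span, hspanK, Submodule.map_top, LinearMap.range_eq_top]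
    exact L.symm.surjective
  obtain ⟨s, hsub, hspan2, hli⟩ := exists_linearIndependent ℚ (Set.range x)
  rw [hxspan] at hspan2
  have hsfin : s.Finite := hli.setFinite
  haveI := hsfin.fintype
  have hbasis : Module.Basis s ℚ (Fin d → ℚ) :=
    Module.Basis.mk hli (by rw [Subtype.range_coe_subtype, Set.setOf_mem_eq, hspan2])
  have hcards : Fintype.card s = d := by
    have h1 := Module.finrank_eq_card_basis hbasis
    rw [Module.finrank_fin_fun ℚ] at h1
    omega
  set e2 : Fin d ≃ s := (Fintype.equivFinOfCardEq hcards).symm with he2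
  have hc : ∀ y : s, ∃ i, x i = (y : Fin d → ℚ) := fun y => hsub y.2
  set v : Fin d → Fin n := fun k => (hc (e2 k)).choose with hv
  have hvx : ∀ k, x (v k) = ((e2 k : s) : Fin d → ℚ) := fun k => (hc (e2 k)).choose_spec
  have hli2 : LinearIndependent ℚ (fun k => x (v k)) := by
    rw [funext hvx]
    exact hli.comp e2 e2.injective
  refine ⟨v, ?_⟩
  intro h0
  obtain ⟨c, hc0, hmv⟩ := (Matrix.exists_mulVec_eq_zero_iff).mpr h0
  have hzero : ∑ k, c k • x (v k) = 0 := by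
    funext t
    have := congrFun hmv t
    simpa [Matrix.mulVec, dotProduct, Finset.sum_apply, mul_comm] using this
  exact hc0 (funext (Fintype.linearIndependent_iff.mp hli2 c hzero))

lemma Sg_subset {K : Type*} [Field K] [NumberField K] {n : ℕ} (α : Fin n → 𝓞 K) :
    Sg α ⊆ CQ α ∩ Set.range (fun γ : 𝓞 K => (γ : K)) := by
  rintro β ⟨x, rfl⟩
  constructor
  · refine ⟨fun i => (x i : ℚ), fun i => by positivity, ?_⟩
    push_cast
    rfl
  · refine ⟨∑ i, (x i) • α i, ?_⟩
    push_cast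
    simp [nsmul_eq_mul]

lemma Sg_eq_of_gen {K : Type*} [Field K] [NumberField K] {n : ℕ} (α : Fin n → 𝓞 K)
    (σ0 : K →+* ℝ) (hα0 : ∀ i, 0 ≤ σ0 ((α i : K))) (i0 : Fin n)
    (hgen : ∀ γ : 𝓞 K, ∃ m : ℤ, γ = m • α i0) :
    Sg α = CQ α ∩ Set.range (fun γ : 𝓞 K => (γ : K)) := by
  classical
  refine le_antisymm (Sg_subset α) ?_
  have hne : α i0 ≠ 0 := by
    intro h
    obtain ⟨m, hm⟩ := hgen 1
    rw [h, smul_zero] at hm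
    exact one_ne_zero hm
  have hneK : ((α i0 : K)) ≠ 0 := by simpa using hne
  have hpos : 0 < σ0 ((α i0 : K)) := by
    rcases lt_or_eq_of_le (hα0 i0) with h | h
    · exact h
    · exact absurd (σ0.injective (by rw [← h, map_zero])).symm hneK
  have hN : ∀ j, ∃ N : ℤ, 0 ≤ N ∧ α j = N • α i0 := by
    intro j
    obtain ⟨N, hNj⟩ := hgen (α j)
    refine ⟨N, ?_, hNj⟩
    have hK : ((α j : K)) = (N : K) * ((α i0 : K)) := by
      rw [hNj]
      push_cast [zsmul_eq_mul]
      rfl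
    have h2 := hα0 j
    rw [hK, map_mul, map_intCast] at h2
    exact_mod_cast (mul_nonneg_iff_of_pos_right hpos).mp h2
  choose N hN0 hNdef using hN
  rintro β ⟨⟨q, hq0, hqs⟩, ⟨γ, hγ⟩⟩
  obtain ⟨m, hm⟩ := hgen γ
  have hterm : ∀ i, ((q i : K)) * ((α i : K)) = ((q i * (N i : ℚ) : ℚ) : K) * ((α i0 : K)) := by
    intro i
    rw [hNdef i]
    have hz : ((N i • α i0 : 𝓞 K) : K) = ((N i : ℤ) : K) * ((α i0 : K)) := by
      rw [zsmul_eq_mul]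
      push_cast
      rfl
    rw [hz]
    push_cast
    ring
  have hβ1 : β = ((∑ i, q i * (N i : ℚ) : ℚ) : K) * ((α i0 : K)) := by
    rw [hqs, Finset.sum_congr rfl (fun i _ => hterm i), ← Finset.sum_mul, ← Rat.cast_sum]
  have hβ2 : β = ((m : ℚ) : K) * ((α i0 : K)) := by
    rw [← hγ]
    show ((γ : K)) = _
    rw [hm]
    push_cast [zsmul_eq_mul]
    rfl
  have heq : (∑ i, q i * (N i : ℚ)) = (m : ℚ) := by
    have h3 := hβ1.symm.trans hβ2
    have h4 := mul_right_cancel₀ hneK h3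
    exact_mod_cast h4
  have hm0 : 0 ≤ m := by
    have h5 : 0 ≤ ∑ i, q i * (N i : ℚ) :=
      Finset.sum_nonneg fun i _ => mul_nonneg (hq0 i) (by exact_mod_cast hN0 i)
    rw [heq] at h5
    exact_mod_cast h5
  refine ⟨fun j => if j = i0 then m.toNat else 0, ?_⟩
  have hsum2 : ∑ j, (((if j = i0 then m.toNat else 0 : ℕ)) : K) * ((α j : K)) =
      (m.toNat : K) * ((α i0 : K)) := by
    rw [Finset.sum_eq_single i0]
    · simp
    · intro j _ hj
      simp [hj]
    · intro h
      exact absurd (Finset.mem_univ i0) h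
  rw [hβ2, hsum2, ← Int.toNat_of_nonneg hm0]
  push_cast
  rfl

lemma factorial_ineq_caseA {d n : ℕ} (hd : 1 ≤ d) (hn : d < n) (h12 : ¬(d = 1 ∧ n = 2)) :
    3 * (d.factorial * ((n - d + 1) * (n - d - 1).factorial)) ≤ 2 * n.factorial := by
  obtain ⟨k, rfl⟩ : ∃ k, n = d + k + 1 := ⟨n - d - 1, by omega⟩
  have h1 : d + k + 1 - d + 1 = k + 2 := by omega
  have h2 : d + k + 1 - d - 1 = k := by omega
  rw [h1, h2]
  rcases Nat.lt_or_ge d 2 with hd2 | hd2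
  · have hd1 : d = 1 := by omega
    subst hd1
    have hk : 1 ≤ k := by omega
    obtain ⟨k', rfl⟩ : ∃ k', k = k' + 1 := ⟨k - 1, by omega⟩
    have e : (1 + (k' + 1) + 1) = k' + 3 := by omega
    rw [e, Nat.factorial_one, one_mul]
    have e2 : (k' + 3).factorial = (k' + 3) * ((k' + 2) * (k' + 1).factorial) := by
      rw [show k' + 3 = (k' + 2) + 1 from rfl, Nat.factorial_succ,
        show k' + 2 = (k' + 1) + 1 from rfl, Nat.factorial_succ]
    rw [e2]
    nlinarith [Nat.factorial_pos (k' + 1)]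
  · clear h1 h2 h12 hn
    induction k with
    | zero =>
      have e : (d + 0 + 1).factorial = (d + 1) * d.factorial := by
        rw [show d + 0 + 1 = d + 1 from rfl, Nat.factorial_succ]
      rw [e]
      simp only [Nat.factorial_zero]
      nlinarith [Nat.factorial_pos d]
    | succ k ih =>
      have e3 : (d + (k + 1) + 1).factorial = (d + k + 2) * (d + k + 1).factorial := by
        rw [show d + (k + 1) + 1 = (d + k + 1) + 1 from by ring, Nat.factorial_succ]
      rw [e3, Nat.factorial_succ]
      have key : (k + 1 + 2) * ((k + 1) * k.factorial) ≤ (d + k + 2) * ((k + 2) * k.factorial) := by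
        have h4 : (k + 3) * (k + 1) ≤ (d + k + 2) * (k + 2) := by nlinarith
        calc (k + 1 + 2) * ((k + 1) * k.factorial) = ((k + 3) * (k + 1)) * k.factorial := by ring
          _ ≤ ((d + k + 2) * (k + 2)) * k.factorial := Nat.mul_le_mul_right _ h4
          _ = (d + k + 2) * ((k + 2) * k.factorial) := by ring
      calc 3 * (d.factorial * ((k + 1 + 2) * ((k + 1) * k.factorial)))
          ≤ 3 * (d.factorial * ((d + k + 2) * ((k + 2) * k.factorial))) :=
            Nat.mul_le_mul_left _ (Nat.mul_le_mul_left _ key)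
        _ = (d + k + 2) * (3 * (d.factorial * ((k + 2) * k.factorial))) := by ring
        _ ≤ (d + k + 2) * (2 * (d + k + 1).factorial) := Nat.mul_le_mul_left _ ih
        _ = 2 * ((d + k + 2) * (d + k + 1).factorial) := by ring

lemma boundA {K : Type*} [Field K] [NumberField K] {d n : ℕ} (hn0 : n ≠ 0)
    (σ : Fin d → (K →+* ℝ)) (hσ : Function.Injective σ) (hd : Module.finrank ℚ K = d)
    (α : Fin n → 𝓞 K) (hα : ∀ i j, 0 ≤ σ j ((α i : K)))
    (hspan : Submodule.span ℤ (Set.range α) = ⊤) :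
    |(NumberField.discr K : ℝ)| ≤
      ((Nat.factorial d : ℝ) * heightK (fun i => ((α i : K)))) ^ 2 := by
  classical
  have hne : Nonempty (Fin n) := Fin.pos_iff_nonempty.mp (Nat.pos_of_ne_zero hn0)
  set h := heightK (fun i => ((α i : K))) with hhdef
  set m : Fin d → ℝ := fun j => max 1 (⨆ i, σ j ((α i : K))) with hmdef
  have hm1 : ∀ j, (1:ℝ) ≤ m j := fun j => le_max_left _ _
  have hPh : ∏ j, m j ≤ h := prod_max_le_heightK hn0 σ hσ α hα
  have hP0 : (0:ℝ) ≤ ∏ j, m j :=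
    Finset.prod_nonneg fun j _ => le_trans zero_le_one (hm1 j)
  have hcard : Fintype.card (Module.Free.ChooseBasisIndex ℤ (𝓞 K)) = d := by
    rw [← Module.finrank_eq_card_chooseBasisIndex, NumberField.RingOfIntegers.rank, hd]
  set eι : Module.Free.ChooseBasisIndex ℤ (𝓞 K) ≃ Fin d := Fintype.equivFinOfCardEq hcard
    with heι
  set b0 : Module.Basis (Fin d) ℤ (𝓞 K) := (NumberField.RingOfIntegers.basis K).reindex eι with hb0def
  set B : Matrix (Fin d) (Fin d) ℝ := Matrix.of fun t j => σ j ((b0 t : K)) with hBdef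
  have hBet : (Matrix.of fun t j => σ j (NumberField.integralBasis K (eι.symm t))) = B := by
    ext t j
    rw [hBdef]
    simp only [Matrix.of_apply]
    rw [hb0def, Module.Basis.reindex_apply, NumberField.integralBasis_apply]
  have hdisc : ((NumberField.discr K : ℝ)) = B.det ^ 2 := by
    rw [discr_eq_det_sq σ hσ hd eι, hBet]
  obtain ⟨v, hv⟩ := exists_good_minor α hspan b0
  set Mint : Matrix (Fin d) (Fin d) ℤ := Matrix.of fun t k => b0.repr (α (v k)) t with hMdef
  have hMint0 : Mint.det ≠ 0 := by
    intro h0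
    apply hv
    have : (Matrix.of fun t k => ((b0.repr (α (v k)) t : ℚ))) =
        (Int.castRingHom ℚ).mapMatrix Mint := rfl
    rw [this, ← RingHom.map_det, h0]
    simp
  have hdetR : (Matrix.of fun t k => ((Mint t k : ℤ) : ℝ)).det = ((Mint.det : ℤ) : ℝ) := by
    have : (Matrix.of fun t k => ((Mint t k : ℤ) : ℝ)) = (Int.castRingHom ℝ).mapMatrix Mint := rfl
    rw [this, ← RingHom.map_det]
    rfl
  have hABM : (Matrix.of fun j k => σ j ((α (v k) : K))) =
      B.transpose * (Matrix.of fun t k => ((Mint t k : ℤ) : ℝ)) := by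
    ext j k
    rw [Matrix.mul_apply]
    have hrep : ((α (v k) : K)) = ∑ t, ((b0.repr (α (v k)) t : ℤ) : K) * ((b0 t : K)) := by
      conv_lhs => rw [show ((α (v k) : K)) = algebraMap (𝓞 K) K (α (v k)) from rfl,
        ← Module.Basis.sum_repr b0 (α (v k))]
      rw [map_sum]
      refine Finset.sum_congr rfl fun t _ => ?_
      have hz : algebraMap (𝓞 K) K ((b0.repr (α (v k)) t) • b0 t) =
          ((b0.repr (α (v k)) t : ℤ) : K) * ((b0 t : K)) := by
        rw [map_zsmul, zsmul_eq_mul]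
      exact hz
    simp only [Matrix.of_apply]
    rw [hrep, map_sum]
    refine Finset.sum_congr rfl fun t _ => ?_
    rw [map_mul, map_intCast]
    simp only [Matrix.transpose_apply, hBdef, Matrix.of_apply, hMdef]
    ring
  have hdet2 : (Matrix.of fun j k => σ j ((α (v k) : K))).det = B.det * ((Mint.det : ℤ) : ℝ) := by
    rw [hABM, Matrix.det_mul, Matrix.det_transpose, hdetR]
  have hav_le : |(Matrix.of fun j k => σ j ((α (v k) : K))).det| ≤
      (Nat.factorial d : ℝ) * ∏ j, m j := by
    apply abs_det_le_prod
    intro j k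
    simp only [Matrix.of_apply]
    rw [abs_of_nonneg (hα (v k) j)]
    refine le_trans ?_ (le_max_right 1 _)
    exact le_ciSup (f := fun i => σ j ((α i : K)))
      (Set.Finite.bddAbove (Set.finite_range _)) (v k)
  have hone : (1:ℝ) ≤ |((Mint.det : ℤ) : ℝ)| := by
    have h1 : 1 ≤ |Mint.det| := Int.one_le_abs hMint0
    calc (1:ℝ) = ((1 : ℤ) : ℝ) := by norm_num
      _ ≤ ((|Mint.det| : ℤ) : ℝ) := by exact_mod_cast h1
      _ = |((Mint.det : ℤ) : ℝ)| := by push_cast; rfl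
  have hBdet_le : |B.det| ≤ (Nat.factorial d : ℝ) * h := by
    have h1 : |B.det| ≤ |B.det| * |((Mint.det : ℤ) : ℝ)| :=
      le_mul_of_one_le_right (abs_nonneg _) hone
    have h2 : |B.det| * |((Mint.det : ℤ) : ℝ)| =
        |(Matrix.of fun j k => σ j ((α (v k) : K))).det| := by
      rw [hdet2, abs_mul]
    have h3 : (Nat.factorial d : ℝ) * ∏ j, m j ≤ (Nat.factorial d : ℝ) * h :=
      mul_le_mul_of_nonneg_left hPh (by positivity)
    linarith
  rw [hdisc, abs_of_nonneg (sq_nonneg B.det)]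
  calc B.det ^ 2 = |B.det| ^ 2 := (sq_abs _).symm
    _ ≤ ((Nat.factorial d : ℝ) * h) ^ 2 := by
        apply pow_le_pow_left₀ (abs_nonneg _) hBdet_le

lemma exists_big_coeff {K : Type*} [Field K] [NumberField K] {n : ℕ} (σ0 : K →+* ℝ)
    (α : Fin n → 𝓞 K) (hα0 : ∀ i, 0 ≤ σ0 ((α i : K)))
    (hspan : Submodule.span ℤ (Set.range α) = ⊤)
    (hne : Sg α ≠ CQ α ∩ Set.range (fun γ : 𝓞 K => (γ : K)))
    (b0 : Module.Basis (Fin 1) ℤ (𝓞 K)) :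
    ∃ i, 2 ≤ |b0.repr (α i) 0| := by
  classical
  by_contra hcon
  push_neg at hcon
  set M : Fin n → ℤ := fun i => b0.repr (α i) 0 with hM
  have hrep : ∀ i, α i = M i • b0 0 := by
    intro i
    conv_lhs => rw [← Module.Basis.sum_repr b0 (α i)]
    rw [Fin.sum_univ_one]
  have hb00 : b0 0 ∈ Submodule.span ℤ (Set.range α) := by rw [hspan]; trivial
  obtain ⟨c, hc⟩ := (Submodule.mem_span_range_iff_exists_fun (R := ℤ)).mp hb00
  have hsum : ∑ i, c i * M i = 1 := by
    have h1 : b0.repr (∑ i, c i • α i) 0 = ∑ i, c i * b0.repr (α i) 0 := by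
      rw [map_sum, Finsupp.finset_sum_apply]
      exact Finset.sum_congr rfl fun i _ => by rw [map_zsmul, Finsupp.smul_apply, smul_eq_mul]
    rw [hc] at h1
    rw [Module.Basis.repr_self, Finsupp.single_eq_same] at h1
    exact h1.symm
  have hex : ∃ i0, M i0 ≠ 0 := by
    by_contra hall
    push_neg at hall
    rw [Finset.sum_eq_zero (fun i _ => by rw [hall i, mul_zero])] at hsum
    exact one_ne_zero hsum.symm
  obtain ⟨i0, hi0⟩ := hex
  have hMi0 : M i0 = 1 ∨ M i0 = -1 := by
    have h5 : |M i0| < 2 := hcon i0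
    rw [abs_lt] at h5
    omega
  have hb0eq : b0 0 = M i0 • α i0 := by
    rcases hMi0 with h | h <;> rw [hrep i0, h] <;> simp
  have hgen : ∀ γ : 𝓞 K, ∃ m : ℤ, γ = m • α i0 := by
    intro γ
    refine ⟨b0.repr γ 0 * M i0, ?_⟩
    conv_lhs => rw [← Module.Basis.sum_repr b0 γ]
    rw [Fin.sum_univ_one, hb0eq, smul_smul]
  exact hne (Sg_eq_of_gen α σ0 hα0 i0 hgen)

lemma boundB {K : Type*} [Field K] [NumberField K] {n : ℕ} (hn0 : n ≠ 0)
    (σ0 : K →+* ℝ) (hd : Module.finrank ℚ K = 1)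
    (α : Fin n → 𝓞 K) (hα0 : ∀ i, 0 ≤ σ0 ((α i : K)))
    (hspan : Submodule.span ℤ (Set.range α) = ⊤)
    (hne : Sg α ≠ CQ α ∩ Set.range (fun γ : 𝓞 K => (γ : K))) :
    4 * |(NumberField.discr K : ℝ)| ≤ heightK (fun i => ((α i : K))) ^ 2 := by
  classical
  have hnonempty : Nonempty (Fin n) := Fin.pos_iff_nonempty.mp (Nat.pos_of_ne_zero hn0)
  set h := heightK (fun i => ((α i : K))) with hhdef
  set σ' : Fin 1 → (K →+* ℝ) := fun _ => σ0 with hσ'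
  have hσ'inj : Function.Injective σ' := fun a b _ => Subsingleton.elim a b
  have hα' : ∀ i j, 0 ≤ σ' j ((α i : K)) := fun i _ => hα0 i
  have hPh : ∏ j, max 1 (⨆ i, σ' j ((α i : K))) ≤ h :=
    prod_max_le_heightK hn0 σ' hσ'inj α hα'
  rw [Fin.prod_univ_one] at hPh
  have hcard : Fintype.card (Module.Free.ChooseBasisIndex ℤ (𝓞 K)) = 1 := by
    rw [← Module.finrank_eq_card_chooseBasisIndex, NumberField.RingOfIntegers.rank, hd]
  set eι : Module.Free.ChooseBasisIndex ℤ (𝓞 K) ≃ Fin 1 := Fintype.equivFinOfCardEq hcard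
    with heι
  set b0 : Module.Basis (Fin 1) ℤ (𝓞 K) := (NumberField.RingOfIntegers.basis K).reindex eι with hb0def
  set B : Matrix (Fin 1) (Fin 1) ℝ := Matrix.of fun t j => σ' j ((b0 t : K)) with hBdef
  have hBet : (Matrix.of fun t j => σ' j (NumberField.integralBasis K (eι.symm t))) = B := by
    ext t j
    rw [hBdef]
    simp only [Matrix.of_apply]
    rw [hb0def, Module.Basis.reindex_apply, NumberField.integralBasis_apply]
  have hdisc : ((NumberField.discr K : ℝ)) = B.det ^ 2 := by
    rw [discr_eq_det_sq σ' hσ'inj hd eι, hBet]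
  have hBdet : B.det = σ0 ((b0 0 : K)) := by
    rw [Matrix.det_fin_one]
    rfl
  obtain ⟨istar, histar⟩ := exists_big_coeff σ0 α hα0 hspan hne b0
  have hrep : α istar = (b0.repr (α istar) 0) • b0 0 := by
    conv_lhs => rw [← Module.Basis.sum_repr b0 (α istar)]
    rw [Fin.sum_univ_one]
  have hσα : σ0 ((α istar : K)) = ((b0.repr (α istar) 0 : ℤ) : ℝ) * σ0 ((b0 0 : K)) := by
    conv_lhs => rw [hrep]
    have hz : (((b0.repr (α istar) 0) • b0 0 : 𝓞 K) : K) =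
        ((b0.repr (α istar) 0 : ℤ) : K) * ((b0 0 : K)) := by
      rw [show (((b0.repr (α istar) 0) • b0 0 : 𝓞 K) : K) =
        algebraMap (𝓞 K) K ((b0.repr (α istar) 0) • b0 0) from rfl, map_zsmul, zsmul_eq_mul]
    rw [hz, map_mul, map_intCast]
  have habs : 2 * |B.det| ≤ σ0 ((α istar : K)) := by
    rw [← abs_of_nonneg (hα0 istar), hσα, abs_mul, hBdet]
    have h2 : (2:ℝ) ≤ |((b0.repr (α istar) 0 : ℤ) : ℝ)| := by
      calc (2:ℝ) = ((2 : ℤ) : ℝ) := by norm_num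
        _ ≤ ((|b0.repr (α istar) 0| : ℤ) : ℝ) := by exact_mod_cast histar
        _ = |((b0.repr (α istar) 0 : ℤ) : ℝ)| := by push_cast; rfl
    exact mul_le_mul_of_nonneg_right h2 (abs_nonneg _)
  have hh : 2 * |B.det| ≤ h := by
    refine le_trans habs (le_trans ?_ hPh)
    refine le_trans ?_ (le_max_right 1 _)
    exact le_ciSup (f := fun i => σ0 ((α i : K)))
      (Set.Finite.bddAbove (Set.finite_range _)) istar
  have hB0 : 0 ≤ 2 * |B.det| := by positivity
  calc 4 * |(NumberField.discr K : ℝ)| = (2 * |B.det|) ^ 2 := by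
        rw [hdisc, abs_of_nonneg (sq_nonneg B.det)]
        rw [mul_pow, sq_abs]
        ring
    _ ≤ h ^ 2 := by apply pow_le_pow_left₀ hB0 hh

/-- **Corollary 3.4 (Fukshansky–Shi).** -/
theorem absolute_height_lower_bound {K : Type*} [Field K] [NumberField K] {d n : ℕ}
    (σ : Fin d → (K →+* ℝ)) (hσ : Function.Injective σ)
    (hd : Module.finrank ℚ K = d) (hn : d < n)
    (α : Fin n → 𝓞 K)
    (hα : ∀ i j, 0 ≤ σ j ((α i : K)))
    (hspan : Submodule.span ℤ (Set.range α) = ⊤)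
    (hne : Sg α ≠ CQ α ∩ Set.range (fun γ : 𝓞 K => (γ : K))) :
    (2 * |(NumberField.discr K : ℝ)| * Real.sqrt ((n : ℝ) - d + 1) *
        (Nat.factorial (n - d - 1) : ℝ) /
          ((Nat.factorial d : ℝ) * (Nat.factorial n : ℝ))) ^ ((1 : ℝ) / (2 * d)) ≤
      heightK (fun i => (α i : K)) ^ ((1 : ℝ) / d) := by
  have hdpos : 0 < d := by
    have h0 := Module.finrank_pos (R := ℚ) (M := K)
    omega
  have hn0 : n ≠ 0 := by omega
  have hh1 : (1:ℝ) ≤ heightK (fun i => ((α i : K))) := heightK_one_le hn0 α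
  have hdR : ((d:ℝ)) ≠ 0 := Nat.cast_ne_zero.mpr (by omega)
  suffices hC2 : 2 * |(NumberField.discr K : ℝ)| * Real.sqrt ((n : ℝ) - d + 1) *
      (Nat.factorial (n - d - 1) : ℝ) / ((Nat.factorial d : ℝ) * (Nat.factorial n : ℝ)) ≤
      heightK (fun i => (α i : K)) ^ 2 by
    have hC0 : 0 ≤ 2 * |(NumberField.discr K : ℝ)| * Real.sqrt ((n : ℝ) - d + 1) *
        (Nat.factorial (n - d - 1) : ℝ) /
          ((Nat.factorial d : ℝ) * (Nat.factorial n : ℝ)) := by positivity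
    have e1 : heightK (fun i => (α i : K)) ^ ((1 : ℝ) / d) =
        (heightK (fun i => (α i : K)) ^ 2) ^ ((1 : ℝ) / (2 * d)) := by
      rw [← Real.rpow_natCast (heightK (fun i => (α i : K))) 2,
        ← Real.rpow_mul (le_trans zero_le_one hh1)]
      congr 1
      push_cast
      field_simp
    rw [e1]
    exact Real.rpow_le_rpow hC0 hC2 (by positivity)
  by_cases hcase : d = 1 ∧ n = 2
  · obtain ⟨hd1, hn2⟩ := hcase
    subst hd1
    subst hn2
    have hb := boundB (by norm_num) (σ 0) hd α (fun i => hα i 0) hspan hne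
    have hsqrt2 : Real.sqrt (2 : ℝ) ≤ 2 := by
      nlinarith [Real.sq_sqrt (by norm_num : (0:ℝ) ≤ (2:ℝ)), Real.sqrt_nonneg (2:ℝ)]
    have habs0 : 0 ≤ |(NumberField.discr K : ℝ)| := abs_nonneg _
    have hs0 : 0 ≤ Real.sqrt (2:ℝ) := Real.sqrt_nonneg _
    have hcast : ((2:ℕ):ℝ) - ((1:ℕ):ℝ) + 1 = (2:ℝ) := by norm_num
    rw [show (2 - 1 - 1 : ℕ) = 0 from rfl, Nat.factorial_zero, Nat.factorial_one,
      show Nat.factorial 2 = 2 from rfl, hcast]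
    norm_num
    nlinarith [hb, habs0, hs0, hsqrt2, mul_le_mul_of_nonneg_left hsqrt2 habs0]
  · have hb := boundA hn0 σ hσ hd α hα hspan
    have hfd : (0:ℝ) < (Nat.factorial d : ℝ) * (Nat.factorial n : ℝ) := by positivity
    rw [div_le_iff₀ hfd]
    have hw : ((n : ℝ) - d + 1) = ((n - d + 1 : ℕ) : ℝ) := by
      push_cast [Nat.cast_sub hn.le]
      ring
    have hw2 : (2:ℝ) ≤ ((n:ℝ) - d + 1) := by
      have : (d:ℝ) + 1 ≤ n := by exact_mod_cast hn
      linarith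
    have hsq : Real.sqrt ((n:ℝ) - d + 1) ≤ 3/4 * ((n:ℝ) - d + 1) := by
      have h1 : Real.sqrt ((n:ℝ) - d + 1) ≤ Real.sqrt ((3/4 * ((n:ℝ) - d + 1))^2) := by
        apply Real.sqrt_le_sqrt
        nlinarith
      rwa [Real.sqrt_sq (by linarith)] at h1
    have hnat := factorial_ineq_caseA hdpos hn hcase
    have hnatR : (3:ℝ) * ((Nat.factorial d : ℝ) * (((n:ℝ) - (d:ℝ) + 1) *
        (Nat.factorial (n - d - 1) : ℝ))) ≤ 2 * (Nat.factorial n : ℝ) := by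
      rw [hw]
      exact_mod_cast hnat
    have hF0 : (0:ℝ) ≤ (Nat.factorial (n - d - 1) : ℝ) := by positivity
    have hD0 : (0:ℝ) < (Nat.factorial d : ℝ) := by positivity
    calc 2 * |(NumberField.discr K : ℝ)| * Real.sqrt ((n : ℝ) - d + 1) *
          (Nat.factorial (n - d - 1) : ℝ)
        = 2 * (Nat.factorial (n - d - 1) : ℝ) *
            (|(NumberField.discr K : ℝ)| * Real.sqrt ((n : ℝ) - d + 1)) := by ring
      _ ≤ 2 * (Nat.factorial (n - d - 1) : ℝ) *
            (((Nat.factorial d : ℝ) * heightK (fun i => (α i : K))) ^ 2 *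
              (3/4 * ((n:ℝ) - d + 1))) := by
          refine mul_le_mul_of_nonneg_left ?_ (by positivity)
          exact mul_le_mul hb hsq (Real.sqrt_nonneg _) (by positivity)
      _ = heightK (fun i => (α i : K)) ^ 2 * ((Nat.factorial d : ℝ) / 2 *
            ((3:ℝ) * ((Nat.factorial d : ℝ) * (((n:ℝ) - (d:ℝ) + 1) *
              (Nat.factorial (n - d - 1) : ℝ))))) := by ring
      _ ≤ heightK (fun i => (α i : K)) ^ 2 * ((Nat.factorial d : ℝ) / 2 *
            (2 * (Nat.factorial n : ℝ))) := by
          refine mul_le_mul_of_nonneg_left ?_ (by positivity)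
          exact mul_le_mul_of_nonneg_left hnatR (by positivity)
      _ = heightK (fun i => (α i : K)) ^ 2 *
            ((Nat.factorial d : ℝ) * (Nat.factorial n : ℝ)) := by ring
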